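/- Let K be a field of characteristic zero and L a purely transcendental extension of K. Let N₁, N₂ be finite-dimensional K(x)-vector spaces with K-linear connections (i.e. differential modules over K(x)). If N₁ ⊗_{K(x)} L(x) and N₂ ⊗_{K(x)} L(x) are isomorphic as differential modules over L(x), then N₁ and N₂ are isomorphic over K(x). -/

import Mathlib

set_option linter.unusedSectionVars false
noncomputable section
namespace St3

variable {K L : Type*} [Field K] [CharZero K] [Field L] [Algebra K L]

noncomputable def alpha (s : Set L) : MvPolynomial (Option s) K →+* RatFunc L :=
  MvPolynomial.eval₂Hom ((RatFunc.C : L →+* RatFunc L).comp (algebraMap K L))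
    (fun o => Option.elim o RatFunc.X (fun i => RatFunc.C (i : L)))

lemma alpha_C (s : Set L) (k : K) :
    alpha (K := K) s (MvPolynomial.C k) = RatFunc.C (algebraMap K L k) := by
  simp [alpha]

lemma alpha_X_none (s : Set L) :
    alpha (K := K) s (MvPolynomial.X none) = RatFunc.X := by simp [alpha]

lemma alpha_X_some (s : Set L) (i : s) :
    alpha (K := K) s (MvPolynomial.X (some i)) = RatFunc.C (i : L) := by simp [alpha]

-- decomposition through Polynomial (MvPolynomial s K)
noncomputable def beta (s : Set L) : Polynomial (MvPolynomial s K) →+* RatFunc L :=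
  Polynomial.eval₂RingHom
    ((RatFunc.C : L →+* RatFunc L).comp (MvPolynomial.aeval ((↑) : s → L)).toRingHom)
    RatFunc.X

lemma alpha_eq_beta (s : Set L) :
    (alpha (K := K) s) = (beta (K := K) s).comp
      (MvPolynomial.optionEquivLeft K s).toAlgHom.toRingHom := by
  apply MvPolynomial.ringHom_ext
  · intro r
    simp [alpha, beta, MvPolynomial.optionEquivLeft_C]
  · intro i
    cases i with
    | none => simp [alpha, beta, MvPolynomial.optionEquivLeft_X_none]
    | some x => simp [alpha, beta, MvPolynomial.optionEquivLeft_X_some]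

lemma beta_eq (s : Set L) :
    (beta (K := K) s) = ((algebraMap (Polynomial L) (RatFunc L)).comp
      (Polynomial.mapRingHom (MvPolynomial.aeval ((↑) : s → L)).toRingHom)) := by
  apply Polynomial.ringHom_ext
  · intro a
    simp only [beta, Polynomial.coe_eval₂RingHom, Polynomial.eval₂_C, RingHom.comp_apply,
      Polynomial.coe_mapRingHom, Polynomial.map_C, RatFunc.algebraMap_C]
  · simp [beta, RatFunc.algebraMap_X]

lemma alpha_injective {s : Set L} (hs : AlgebraicIndependent K ((↑) : s → L)) :
    Function.Injective (alpha (K := K) s) := by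
  intro p q h
  simp only [alpha_eq_beta, beta_eq, RingHom.comp_apply, AlgHom.toRingHom_eq_coe,
    AlgHom.coe_coe, AlgEquiv.toAlgHom_eq_coe, Polynomial.coe_mapRingHom] at h
  have h2 := RatFunc.algebraMap_injective L h
  have h3 := Polynomial.map_injective _
    (hs : Function.Injective (MvPolynomial.aeval ((↑) : s → L))) h2
  exact (MvPolynomial.optionEquivLeft K s).injective h3

variable (δL : Derivation L (RatFunc L) (RatFunc L)) (hδL : δL RatFunc.X = 1)

lemma deriv_C (l : L) : δL (RatFunc.C l) = 0 := by
  rw [← RatFunc.algebraMap_eq_C]; exact Derivation.map_algebraMap δL l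

lemma alpha_pderiv (hδL : δL RatFunc.X = 1) (s : Set L) (p : MvPolynomial (Option s) K) :
    δL (alpha (K := K) s p) = alpha s (MvPolynomial.pderiv none p) := by
  classical
  induction p using MvPolynomial.induction_on with
  | C k => simp [alpha_C, deriv_C]
  | add p q hp hq => simp [map_add, hp, hq]
  | mul_X p i hp =>
    rw [map_mul, Derivation.leibniz, smul_eq_mul, smul_eq_mul, MvPolynomial.pderiv_mul,
      map_add, map_mul, map_mul, hp]
    cases i with
    | none =>
      simp only [alpha_X_none, MvPolynomial.pderiv_X, Pi.single_eq_same, hδL, map_one]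
      ring
    | some x =>
      simp only [alpha_X_some, deriv_C, MvPolynomial.pderiv_X]
      rw [Pi.single_eq_of_ne (by simp)]
      simp only [map_zero]
      ring

-- the evaluation map at a point c : s → K
noncomputable def evc (s : Set L) (c : s → K) : MvPolynomial (Option s) K →+* RatFunc K :=
  MvPolynomial.eval₂Hom (algebraMap K (RatFunc K))
    (fun o => Option.elim o RatFunc.X (fun i => algebraMap K (RatFunc K) (c i)))

variable (δK : Derivation K (RatFunc K) (RatFunc K)) (hδK : δK RatFunc.X = 1)

lemma evc_pderiv (hδK : δK RatFunc.X = 1) (s : Set L) (c : s → K) (p : MvPolynomial (Option s) K) :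
    δK (evc (K := K) s c p) = evc s c (MvPolynomial.pderiv none p) := by
  classical
  induction p using MvPolynomial.induction_on with
  | C k =>
    simp only [evc, MvPolynomial.eval₂Hom_C, MvPolynomial.pderiv_C, map_zero,
      Derivation.map_algebraMap]
  | add p q hp hq => simp [map_add, hp, hq]
  | mul_X p i hp =>
    rw [map_mul, Derivation.leibniz, smul_eq_mul, smul_eq_mul, MvPolynomial.pderiv_mul,
      map_add, map_mul, map_mul, hp]
    cases i with
    | none =>
      simp only [evc, MvPolynomial.eval₂Hom_X', Option.elim, MvPolynomial.pderiv_X,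
        Pi.single_eq_same, hδK, map_one]
      ring
    | some x =>
      simp only [evc, MvPolynomial.eval₂Hom_X', Option.elim, MvPolynomial.pderiv_X]
      rw [Pi.single_eq_of_ne (by simp)]
      simp only [Derivation.map_algebraMap, map_zero]
      ring


-- the map `Polynomial K →+* MvPolynomial (Option s) K`, `X ↦ X none`
noncomputable def jpoly (s : Set L) : Polynomial K →+* MvPolynomial (Option s) K :=
  Polynomial.eval₂RingHom (MvPolynomial.C) (MvPolynomial.X none)

variable (ι : RatFunc K →+* RatFunc L)

lemma alpha_jpoly (hιC : ∀ a : K, ι (RatFunc.C a) = RatFunc.C (algebraMap K L a))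
    (hιX : ι RatFunc.X = RatFunc.X) (s : Set L) (r : Polynomial K) :
    alpha (K := K) s (jpoly s r) = ι (algebraMap (Polynomial K) (RatFunc K) r) := by
  have : (alpha (K := K) s).comp (jpoly s)
      = ι.comp (algebraMap (Polynomial K) (RatFunc K)) := by
    apply Polynomial.ringHom_ext
    · intro a
      simp only [RingHom.comp_apply, jpoly, Polynomial.coe_eval₂RingHom, Polynomial.eval₂_C,
        alpha_C, RatFunc.algebraMap_C, hιC]
    · simp only [RingHom.comp_apply, jpoly, Polynomial.coe_eval₂RingHom, Polynomial.eval₂_X,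
        alpha_X_none, RatFunc.algebraMap_X, hιX]
  exact congrFun (congrArg (fun (f : Polynomial K →+* RatFunc L) => ⇑f) this) r

lemma evc_jpoly (s : Set L) (c : s → K) (r : Polynomial K) :
    evc (K := K) s c (jpoly s r) = algebraMap (Polynomial K) (RatFunc K) r := by
  have : (evc (K := K) s c).comp (jpoly s) = algebraMap (Polynomial K) (RatFunc K) := by
    apply Polynomial.ringHom_ext
    · intro a
      simp only [RingHom.comp_apply, jpoly, Polynomial.coe_eval₂RingHom, Polynomial.eval₂_C,
        RatFunc.algebraMap_C]
      simp [evc, RatFunc.algebraMap_eq_C]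
    · simp only [RingHom.comp_apply, jpoly, Polynomial.coe_eval₂RingHom, Polynomial.eval₂_X,
        RatFunc.algebraMap_X]
      simp [evc]
  exact congrFun (congrArg (fun (f : Polynomial K →+* RatFunc K) => ⇑f) this) r


-- every element of L is a ratio of polynomial expressions in elements of s
lemma exists_ratio {s : Set L} (hadj : IntermediateField.adjoin K s = ⊤) (l : L) :
    ∃ a b : MvPolynomial s K, (MvPolynomial.aeval ((↑) : s → L) b) ≠ 0 ∧
      l * MvPolynomial.aeval ((↑) : s → L) b = MvPolynomial.aeval ((↑) : s → L) a := by
  have hl : l ∈ IntermediateField.adjoin K s := hadj ▸ IntermediateField.mem_top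
  induction hl using IntermediateField.adjoin_induction with
  | mem x hx => exact ⟨MvPolynomial.X ⟨x, hx⟩, 1, by simp, by simp⟩
  | algebraMap x => exact ⟨MvPolynomial.C x, 1, by simp, by simp⟩
  | add x y hx hy ihx ihy =>
    obtain ⟨a, b, hb, hab⟩ := ihx
    obtain ⟨a', b', hb', hab'⟩ := ihy
    refine ⟨a * b' + a' * b, b * b', by simp [hb, hb'], ?_⟩
    have key : (x + y) * (MvPolynomial.aeval ((↑) : s → L) b * MvPolynomial.aeval ((↑) : s → L) b')
        = (x * MvPolynomial.aeval ((↑) : s → L) b) * MvPolynomial.aeval ((↑) : s → L) b'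
          + (y * MvPolynomial.aeval ((↑) : s → L) b') * MvPolynomial.aeval ((↑) : s → L) b := by
      ring
    rw [map_mul, key, hab, hab', map_add, map_mul, map_mul]
  | inv x hx ihx =>
    obtain ⟨a, b, hb, hab⟩ := ihx
    by_cases hx0 : x = 0
    · exact ⟨0, 1, by simp, by simp [hx0]⟩
    · have ha : (MvPolynomial.aeval ((↑) : s → L) a) ≠ 0 := by
        rw [← hab]; exact mul_ne_zero hx0 hb
      refine ⟨b, a, ha, ?_⟩
      field_simp
      rw [← hab]
  | mul x y hx hy ihx ihy =>
    obtain ⟨a, b, hb, hab⟩ := ihx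
    obtain ⟨a', b', hb', hab'⟩ := ihy
    refine ⟨a * a', b * b', by simp [hb, hb'], ?_⟩
    simp only [map_mul]
    rw [← hab, ← hab']; ring

lemma alpha_rename (s : Set L) (p : MvPolynomial s K) :
    alpha (K := K) s (MvPolynomial.rename some p) = RatFunc.C (MvPolynomial.aeval ((↑) : s → L) p) := by
  have : (alpha (K := K) s).comp (MvPolynomial.rename (R := K) (some : s → Option s)).toRingHom
      = (RatFunc.C : L →+* RatFunc L).comp (MvPolynomial.aeval ((↑) : s → L)).toRingHom := by
    apply MvPolynomial.ringHom_ext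
    · intro r
      simp [alpha_C]
    · intro i
      simp [alpha_X_some]
  exact congrFun (congrArg (fun (f : MvPolynomial s K →+* RatFunc L) => ⇑f) this) p

-- every element of RatFunc L is a ratio of alpha-values
lemma exists_alpha_frac {s : Set L} (hadj : IntermediateField.adjoin K s = ⊤) (g : RatFunc L) :
    ∃ p q : MvPolynomial (Option s) K, alpha (K := K) s q ≠ 0 ∧
      g * alpha s q = alpha s p := by
  classical
  set AF : RatFunc L → Prop := fun g => ∃ p q : MvPolynomial (Option s) K,
    alpha (K := K) s q ≠ 0 ∧ g * alpha s q = alpha s p with hAF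
  suffices h : AF g by exact h
  have hmul : ∀ g₁ g₂, AF g₁ → AF g₂ → AF (g₁ * g₂) := by
    rintro g₁ g₂ ⟨p₁, q₁, hq₁, h₁⟩ ⟨p₂, q₂, hq₂, h₂⟩
    refine ⟨p₁ * p₂, q₁ * q₂, by simp only [map_mul]; exact mul_ne_zero hq₁ hq₂, ?_⟩
    simp only [map_mul]
    rw [show g₁ * g₂ * (alpha (K := K) s q₁ * alpha s q₂)
      = (g₁ * alpha s q₁) * (g₂ * alpha s q₂) by ring, h₁, h₂]
  have haddf : ∀ g₁ g₂, AF g₁ → AF g₂ → AF (g₁ + g₂) := by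
    rintro g₁ g₂ ⟨p₁, q₁, hq₁, h₁⟩ ⟨p₂, q₂, hq₂, h₂⟩
    refine ⟨p₁ * q₂ + p₂ * q₁, q₁ * q₂, by simp only [map_mul]; exact mul_ne_zero hq₁ hq₂, ?_⟩
    simp only [map_mul, map_add]
    rw [show (g₁ + g₂) * (alpha (K := K) s q₁ * alpha s q₂)
      = (g₁ * alpha s q₁) * alpha s q₂ + (g₂ * alpha s q₂) * alpha s q₁ by ring, h₁, h₂]
  have hCl : ∀ l : L, AF (RatFunc.C l) := by
    intro l
    obtain ⟨a, b, hb, hab⟩ := exists_ratio (K := K) hadj l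
    refine ⟨MvPolynomial.rename some a, MvPolynomial.rename some b, ?_, ?_⟩
    · rw [alpha_rename]
      have hCinj : Function.Injective (RatFunc.C : L →+* RatFunc L) := by
        rw [← RatFunc.algebraMap_eq_C]
        exact (algebraMap L (RatFunc L)).injective
      exact fun h => hb (hCinj (by rw [h, map_zero]))
    · rw [alpha_rename, alpha_rename, ← map_mul, hab]
  have hXf : AF RatFunc.X := ⟨MvPolynomial.X none, 1, by simp, by simp [alpha_X_none]⟩
  have hpow : ∀ n : ℕ, AF (RatFunc.X ^ n) := by
    intro n
    induction n with
    | zero => exact ⟨1, 1, by simp, by simp⟩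
    | succ n ih => rw [pow_succ]; exact hmul _ _ ih hXf
  have hpoly : ∀ r : Polynomial L, AF (algebraMap (Polynomial L) (RatFunc L) r) := by
    intro r
    induction r using Polynomial.induction_on' with
    | add p q hp hq => rw [map_add]; exact haddf _ _ hp hq
    | monomial n a =>
      rw [← Polynomial.C_mul_X_pow_eq_monomial, map_mul, map_pow, RatFunc.algebraMap_C,
        RatFunc.algebraMap_X]
      exact hmul _ _ (hCl a) (hpow n)
  obtain ⟨p₁, q₁, hq₁, h₁⟩ := hpoly g.num
  obtain ⟨p₂, q₂, hq₂, h₂⟩ := hpoly g.denom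
  have hden : algebraMap (Polynomial L) (RatFunc L) g.denom ≠ 0 := by
    simpa using g.denom_ne_zero
  have hgd : g * algebraMap (Polynomial L) (RatFunc L) g.denom
      = algebraMap (Polynomial L) (RatFunc L) g.num := by
    rw [← eq_div_iff hden]
    exact (RatFunc.num_div_denom g).symm
  have hp₂ : alpha (K := K) s p₂ ≠ 0 := by
    rw [← h₂]; exact mul_ne_zero hden hq₂
  refine ⟨p₁ * q₂, p₂ * q₁, by simp only [map_mul]; exact mul_ne_zero hp₂ hq₁, ?_⟩
  simp only [map_mul]
  calc g * (alpha (K := K) s p₂ * alpha s q₁)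
      = g * (algebraMap (Polynomial L) (RatFunc L) g.denom * alpha s q₂) * alpha s q₁ := by
        rw [h₂]; ring
    _ = (g * algebraMap (Polynomial L) (RatFunc L) g.denom) * alpha s q₁ * alpha s q₂ := by ring
    _ = (algebraMap (Polynomial L) (RatFunc L) g.num * alpha s q₁) * alpha s q₂ := by rw [hgd]
    _ = alpha s p₁ * alpha s q₂ := by rw [h₁]


lemma evc_decomp (s : Set L) (c : s → K) :
    (evc (K := K) (L := L) s c) = ((algebraMap (Polynomial K) (RatFunc K)).comp
      ((Polynomial.mapRingHom (MvPolynomial.eval c : MvPolynomial s K →+* K)).comp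
        (MvPolynomial.optionEquivLeft K s).toAlgHom.toRingHom)) := by
  apply MvPolynomial.ringHom_ext
  · intro r
    simp [evc, MvPolynomial.optionEquivLeft_C, RatFunc.algebraMap_C, RatFunc.algebraMap_eq_C]
  · intro i
    cases i with
    | none =>
      simp [evc, MvPolynomial.optionEquivLeft_X_none, RatFunc.algebraMap_X]
    | some x =>
      simp [evc, MvPolynomial.optionEquivLeft_X_some, RatFunc.algebraMap_C,
        RatFunc.algebraMap_eq_C]

lemma exists_point {s : Set L} {W : MvPolynomial (Option s) K} (hW : W ≠ 0) :
    ∃ c : s → K, evc (K := K) s c W ≠ 0 := by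
  classical
  by_contra hcon
  push_neg at hcon
  set P : Polynomial (MvPolynomial s K) := (MvPolynomial.optionEquivLeft K s) W with hP
  have hPne : P ≠ 0 := fun h => hW ((MvPolynomial.optionEquivLeft K s).injective
    (by rw [← hP, h, map_zero]))
  obtain ⟨i₀, hi₀⟩ : ∃ i₀, P.coeff i₀ ≠ 0 := by
    by_contra hc; push_neg at hc
    exact hPne (Polynomial.ext fun n => by simp [hc n])
  have key : ∀ c : s → K, MvPolynomial.eval c (P.coeff i₀) = 0 := by
    intro c
    have h0 := hcon c
    rw [evc_decomp] at h0
    simp only [RingHom.comp_apply, AlgHom.toRingHom_eq_coe, AlgHom.coe_coe,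
      AlgEquiv.toAlgHom_eq_coe, Polynomial.coe_mapRingHom] at h0
    have hmap0 : (P.map (MvPolynomial.eval c : MvPolynomial s K →+* K)) = 0 := by
      apply RatFunc.algebraMap_injective K
      rw [map_zero]
      exact h0
    have := congrArg (fun r => Polynomial.coeff r i₀) hmap0
    simpa [Polynomial.coeff_map] using this
  have : P.coeff i₀ = 0 := by
    haveI : Infinite K := inferInstance
    exact MvPolynomial.funext (p := P.coeff i₀) (q := 0) (fun x => by simp [key x])
  exact hi₀ this


lemma exists_common_denom {s : Set L} (hadj : IntermediateField.adjoin K s = ⊤)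
    {κ : Type*} [Fintype κ] (g : κ → RatFunc L) :
    ∃ Wd : MvPolynomial (Option s) K, alpha (K := K) s Wd ≠ 0 ∧
      ∀ k, ∃ p, g k * alpha s Wd = alpha (K := K) s p := by
  classical
  choose p q hq h using fun k => exists_alpha_frac (K := K) hadj (g k)
  refine ⟨∏ k, q k, by rw [map_prod]; exact Finset.prod_ne_zero_iff.mpr fun k _ => hq k, ?_⟩
  intro k
  refine ⟨p k * ∏ j ∈ Finset.univ.erase k, q j, ?_⟩
  calc g k * alpha (K := K) s (∏ j, q j)
      = g k * (alpha (K := K) s (q k) * alpha s (∏ j ∈ Finset.univ.erase k, q j)) := by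
        rw [← map_mul, Finset.mul_prod_erase Finset.univ _ (Finset.mem_univ k)]
    _ = (g k * alpha (K := K) s (q k)) * alpha s (∏ j ∈ Finset.univ.erase k, q j) := by ring
    _ = alpha (K := K) s (p k) * alpha s (∏ j ∈ Finset.univ.erase k, q j) := by rw [h k]
    _ = alpha (K := K) s (p k * ∏ j ∈ Finset.univ.erase k, q j) := by rw [map_mul]

theorem specialize {s : Set L} (hs : AlgebraicIndependent K ((↑) : s → L))
    (hadj : IntermediateField.adjoin K s = ⊤)
    (ι : RatFunc K →+* RatFunc L)
    (hιC : ∀ a : K, ι (RatFunc.C a) = RatFunc.C (algebraMap K L a))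
    (hιX : ι RatFunc.X = RatFunc.X)
    (δK : Derivation K (RatFunc K) (RatFunc K)) (hδK : δK RatFunc.X = 1)
    (δL : Derivation L (RatFunc L) (RatFunc L)) (hδL : δL RatFunc.X = 1)
    {n : Type*} [Fintype n] [DecidableEq n]
    (A₁ A₂ : Matrix n n (RatFunc K)) (M M' : Matrix n n (RatFunc L))
    (hMM' : M * M' = 1) (hM'M : M' * M = 1)
    (hδM : ∀ i j, δL (M i j) = (∑ k, M i k * ι (A₁ k j)) - ∑ k, ι (A₂ i k) * M k j) :
    ∃ N N' : Matrix n n (RatFunc K), N * N' = 1 ∧ N' * N = 1 ∧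
      ∀ i j, δK (N i j) = (∑ k, N i k * A₁ k j) - ∑ k, A₂ i k * N k j := by
  classical
  -- the four families of elements needing a common denominator
  set g : (Fin 4 × n × n) → RatFunc L := fun x =>
    match x.1 with
    | 0 => M x.2.1 x.2.2
    | 1 => M' x.2.1 x.2.2
    | 2 => ι (A₁ x.2.1 x.2.2)
    | 3 => ι (A₂ x.2.1 x.2.2) with hg
  obtain ⟨Wd, hWd, hrep⟩ := exists_common_denom (K := K) hadj g
  choose rep hrep using hrep
  set PM : Matrix n n (MvPolynomial (Option s) K) := fun i j => rep (0, i, j) with hPM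
  set PM' : Matrix n n (MvPolynomial (Option s) K) := fun i j => rep (1, i, j) with hPM'
  set B₁ : Matrix n n (MvPolynomial (Option s) K) := fun i j => rep (2, i, j) with hB₁
  set B₂ : Matrix n n (MvPolynomial (Option s) K) := fun i j => rep (3, i, j) with hB₂
  have hrM : ∀ i j, M i j * alpha (K := K) s Wd = alpha s (PM i j) := fun i j => hrep (0, i, j)
  have hrM' : ∀ i j, M' i j * alpha (K := K) s Wd = alpha s (PM' i j) := fun i j => hrep (1, i, j)
  have hrB₁ : ∀ i j, ι (A₁ i j) * alpha (K := K) s Wd = alpha s (B₁ i j) := fun i j => hrep (2, i, j)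
  have hrB₂ : ∀ i j, ι (A₂ i j) * alpha (K := K) s Wd = alpha s (B₂ i j) := fun i j => hrep (3, i, j)
  have hWdne : Wd ≠ 0 := fun h => hWd (by rw [h, map_zero])
  -- the differential identity, descended to the polynomial ring
  have hδD : ∀ i j, MvPolynomial.pderiv none (PM i j) * Wd - PM i j * MvPolynomial.pderiv none Wd
      = (∑ k, PM i k * B₁ k j) - ∑ k, B₂ i k * PM k j := by
    intro i j
    apply alpha_injective (K := K) hs
    have e1 : alpha (K := K) s (MvPolynomial.pderiv none (PM i j))
        = δL (M i j) * alpha s Wd + M i j * δL (alpha (K := K) s Wd) := by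
      rw [← alpha_pderiv (K := K) δL hδL, ← hrM i j, Derivation.leibniz, smul_eq_mul,
        smul_eq_mul]
      ring
    have e2 : alpha (K := K) s (MvPolynomial.pderiv none Wd) = δL (alpha (K := K) s Wd) :=
      (alpha_pderiv (K := K) δL hδL s Wd).symm
    rw [map_sub, map_mul, map_mul, e1, e2, map_sub, map_sum, map_sum]
    have e3 : ∀ k, alpha (K := K) s (PM i k * B₁ k j)
        = (M i k * ι (A₁ k j)) * (alpha (K := K) s Wd ^ 2) := by
      intro k; rw [map_mul, ← hrM, ← hrB₁]; ring
    have e4 : ∀ k, alpha (K := K) s (B₂ i k * PM k j)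
        = (ι (A₂ i k) * M k j) * (alpha (K := K) s Wd ^ 2) := by
      intro k; rw [map_mul, ← hrM, ← hrB₂]; ring
    rw [Finset.sum_congr rfl (fun k _ => e3 k), Finset.sum_congr rfl (fun k _ => e4 k),
      ← Finset.sum_mul, ← Finset.sum_mul, ← sub_mul, ← hδM i j, ← hrM i j]
    ring
  -- the product identities, descended to the polynomial ring
  have hprod : ∀ i j, (∑ k, PM i k * PM' k j)
      = (if i = j then (1 : MvPolynomial (Option s) K) else 0) * Wd ^ 2 := by
    intro i j
    apply alpha_injective (K := K) hs
    rw [map_sum, map_mul]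
    have e3 : ∀ k, alpha (K := K) s (PM i k * PM' k j)
        = (M i k * M' k j) * (alpha (K := K) s Wd ^ 2) := by
      intro k; rw [map_mul, ← hrM, ← hrM']; ring
    rw [Finset.sum_congr rfl (fun k _ => e3 k), ← Finset.sum_mul]
    have : ∑ k, M i k * M' k j = if i = j then 1 else 0 := by
      rw [← Matrix.mul_apply, hMM', Matrix.one_apply]
    rw [this, map_pow]
    split_ifs <;> simp
  have hprod' : ∀ i j, (∑ k, PM' i k * PM k j)
      = (if i = j then (1 : MvPolynomial (Option s) K) else 0) * Wd ^ 2 := by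
    intro i j
    apply alpha_injective (K := K) hs
    rw [map_sum, map_mul]
    have e3 : ∀ k, alpha (K := K) s (PM' i k * PM k j)
        = (M' i k * M k j) * (alpha (K := K) s Wd ^ 2) := by
      intro k; rw [map_mul, ← hrM, ← hrM']; ring
    rw [Finset.sum_congr rfl (fun k _ => e3 k), ← Finset.sum_mul]
    have : ∑ k, M' i k * M k j = if i = j then 1 else 0 := by
      rw [← Matrix.mul_apply, hM'M, Matrix.one_apply]
    rw [this, map_pow]
    split_ifs <;> simp
  -- choose a specialization point
  obtain ⟨c, hw⟩ := exists_point (K := K) (s := s) hWdne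
  set w : RatFunc K := evc (K := K) s c Wd with hwdef
  -- evaluation of the B-matrices
  have hevB : ∀ (A : Matrix n n (RatFunc K)) (B : Matrix n n (MvPolynomial (Option s) K)),
      (∀ i j, ι (A i j) * alpha (K := K) s Wd = alpha s (B i j)) →
      ∀ i j, evc (K := K) s c (B i j) = A i j * w := by
    intro A B hrB i j
    have hd : algebraMap (Polynomial K) (RatFunc K) (A i j).denom ≠ 0 := by
      simpa using (A i j).denom_ne_zero
    have hnum : A i j * algebraMap (Polynomial K) (RatFunc K) (A i j).denom
        = algebraMap (Polynomial K) (RatFunc K) (A i j).num := by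
      rw [← eq_div_iff hd]; exact (RatFunc.num_div_denom _).symm
    have hDid : jpoly (L := L) s (A i j).num * Wd = B i j * jpoly s (A i j).denom := by
      apply alpha_injective (K := K) hs
      rw [map_mul, map_mul, alpha_jpoly ι hιC hιX, alpha_jpoly ι hιC hιX, ← hnum, map_mul,
        ← hrB i j]
      ring
    have heq := congrArg (evc (K := K) s c) hDid
    rw [map_mul, map_mul, evc_jpoly, evc_jpoly, ← hnum, ← hwdef] at heq
    have : (A i j * w) * algebraMap (Polynomial K) (RatFunc K) (A i j).denom
        = evc (K := K) s c (B i j) * algebraMap (Polynomial K) (RatFunc K) (A i j).denom := by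
      rw [← heq]; ring
    exact (mul_right_cancel₀ hd this).symm
  have hevB₁ : ∀ i j, evc (K := K) s c (B₁ i j) = A₁ i j * w := hevB A₁ B₁ hrB₁
  have hevB₂ : ∀ i j, evc (K := K) s c (B₂ i j) = A₂ i j * w := hevB A₂ B₂ hrB₂
  -- define the specialized matrices
  set N : Matrix n n (RatFunc K) := fun i j => evc (K := K) s c (PM i j) * w⁻¹ with hN
  set N' : Matrix n n (RatFunc K) := fun i j => evc (K := K) s c (PM' i j) * w⁻¹ with hN'
  have hNmul : ∀ (P P' : Matrix n n (MvPolynomial (Option s) K)),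
      (∀ i j, (∑ k, P i k * P' k j)
        = (if i = j then (1 : MvPolynomial (Option s) K) else 0) * Wd ^ 2) →
      ∀ i j, (∑ k, (evc (K := K) s c (P i k) * w⁻¹) * (evc (K := K) s c (P' k j) * w⁻¹))
        = if i = j then 1 else 0 := by
    intro P P' hPP i j
    have : ∀ k, (evc (K := K) s c (P i k) * w⁻¹) * (evc (K := K) s c (P' k j) * w⁻¹)
        = evc (K := K) s c (P i k * P' k j) * (w⁻¹ * w⁻¹) := by
      intro k; rw [map_mul]; ring
    rw [Finset.sum_congr rfl (fun k _ => this k), ← Finset.sum_mul, ← map_sum, hPP i j,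
      map_mul, map_pow]
    split_ifs with h
    · rw [map_one, one_mul, pow_two]
      field_simp
      rw [← hwdef]
    · rw [map_zero, zero_mul, zero_mul]
  refine ⟨N, N', ?_, ?_, ?_⟩
  · ext i j
    rw [Matrix.mul_apply, Matrix.one_apply]
    exact hNmul PM PM' hprod i j
  · ext i j
    rw [Matrix.mul_apply, Matrix.one_apply]
    exact hNmul PM' PM hprod' i j
  · intro i j
    have hδw : δK w = evc (K := K) s c (MvPolynomial.pderiv none Wd) :=
      evc_pderiv (K := K) δK hδK s c Wd
    have hδPM : δK (evc (K := K) s c (PM i j))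
        = evc (K := K) s c (MvPolynomial.pderiv none (PM i j)) :=
      evc_pderiv (K := K) δK hδK s c (PM i j)
    have key := congrArg (evc (K := K) s c) (hδD i j)
    rw [map_sub, map_mul, map_mul, map_sub, map_sum, map_sum] at key
    have e3 : ∀ k, evc (K := K) s c (PM i k * B₁ k j)
        = evc (K := K) s c (PM i k) * (A₁ k j * w) := by
      intro k; rw [map_mul, hevB₁]
    have e4 : ∀ k, evc (K := K) s c (B₂ i k * PM k j)
        = (A₂ i k * w) * evc (K := K) s c (PM k j) := by
      intro k; rw [map_mul, hevB₂]
    rw [Finset.sum_congr rfl (fun k _ => e3 k), Finset.sum_congr rfl (fun k _ => e4 k),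
      ← hδPM, ← hwdef, ← hδw] at key
    -- now compute δK (N i j)
    have : δK (N i j) = (δK (evc (K := K) s c (PM i j)) * w
        - evc (K := K) s c (PM i j) * δK w) * (w⁻¹ * w⁻¹) := by
      rw [hN]
      simp only [Derivation.leibniz, Derivation.leibniz_inv, smul_eq_mul]
      field_simp
      ring
    rw [this, key]
    have : ∀ k, N i k * A₁ k j = (evc (K := K) s c (PM i k) * (A₁ k j * w)) * (w⁻¹ * w⁻¹) := by
      intro k
      rw [hN]
      field_simp
    rw [Finset.sum_congr rfl (fun k _ => this k), ← Finset.sum_mul]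
    have : ∀ k, A₂ i k * N k j = ((A₂ i k * w) * evc (K := K) s c (PM k j)) * (w⁻¹ * w⁻¹) := by
      intro k
      rw [hN]
      field_simp
    rw [Finset.sum_congr rfl (fun k _ => this k), ← Finset.sum_mul, ← sub_mul]

end St3

/- **Statement 3.**  Let `K` be a field of characteristic zero and `L` a purely
transcendental extension of `K`.  A differential module over `K(x)` is a
finite-dimensional `K(x)`-vector space `V` with an additive map `D` satisfying the
Leibniz rule with respect to the derivation `d/dx` (the unique `K`-linear derivation
`δK` of `RatFunc K` with `δK X = 1`).  Base change to `L(x)` is encoded by the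
inclusion `ι : K(x) → L(x)` (determined by `ι (C a) = C a`, `ι X = X`), an
`ι`-semilinear map `κ : V → W` commuting with the derivations and carrying a basis
of `V` to a basis of `W`.  If the base changes `W₁`, `W₂` of `N₁ = V₁`, `N₂ = V₂`
are isomorphic as differential modules over `L(x)`, then `V₁ ≅ V₂` over `K(x)`. -/
theorem statement3 (K L : Type*) [Field K] [CharZero K] [Field L] [Algebra K L]
    -- `L/K` is purely transcendental:
    (hpure : ∃ s : Set L, IsTranscendenceBasis K ((↑) : s → L) ∧
      IntermediateField.adjoin K s = ⊤)
    -- the inclusion `K(x) → L(x)`: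
    (ι : RatFunc K →+* RatFunc L)
    (hιC : ∀ a : K, ι (RatFunc.C a) = RatFunc.C (algebraMap K L a))
    (hιX : ι RatFunc.X = RatFunc.X)
    -- the derivations `d/dx`:
    (δK : Derivation K (RatFunc K) (RatFunc K)) (hδK : δK RatFunc.X = 1)
    (δL : Derivation L (RatFunc L) (RatFunc L)) (hδL : δL RatFunc.X = 1)
    -- two differential modules over `K(x)`:
    (V₁ V₂ : Type*) [AddCommGroup V₁] [Module (RatFunc K) V₁]
    [AddCommGroup V₂] [Module (RatFunc K) V₂]
    [FiniteDimensional (RatFunc K) V₁] [FiniteDimensional (RatFunc K) V₂]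
    (D₁ : V₁ →+ V₁) (hD₁ : ∀ (f : RatFunc K) (v : V₁), D₁ (f • v) = δK f • v + f • D₁ v)
    (D₂ : V₂ →+ V₂) (hD₂ : ∀ (f : RatFunc K) (v : V₂), D₂ (f • v) = δK f • v + f • D₂ v)
    -- their base changes to `L(x)`:
    (W₁ W₂ : Type*) [AddCommGroup W₁] [Module (RatFunc L) W₁]
    [AddCommGroup W₂] [Module (RatFunc L) W₂]
    (E₁ : W₁ →+ W₁) (hE₁ : ∀ (f : RatFunc L) (w : W₁), E₁ (f • w) = δL f • w + f • E₁ w)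
    (E₂ : W₂ →+ W₂) (hE₂ : ∀ (f : RatFunc L) (w : W₂), E₂ (f • w) = δL f • w + f • E₂ w)
    (κ₁ : V₁ →+ W₁) (hκ₁ : ∀ (f : RatFunc K) (v : V₁), κ₁ (f • v) = ι f • κ₁ v)
    (hκ₁D : ∀ v : V₁, κ₁ (D₁ v) = E₁ (κ₁ v))
    (κ₂ : V₂ →+ W₂) (hκ₂ : ∀ (f : RatFunc K) (v : V₂), κ₂ (f • v) = ι f • κ₂ v)
    (hκ₂D : ∀ v : V₂, κ₂ (D₂ v) = E₂ (κ₂ v))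
    (ι₁ ι₂ : Type*)
    (bV₁ : Module.Basis ι₁ (RatFunc K) V₁) (bW₁ : Module.Basis ι₁ (RatFunc L) W₁)
    (hb₁ : ∀ i, κ₁ (bV₁ i) = bW₁ i)
    (bV₂ : Module.Basis ι₂ (RatFunc K) V₂) (bW₂ : Module.Basis ι₂ (RatFunc L) W₂)
    (hb₂ : ∀ i, κ₂ (bV₂ i) = bW₂ i)
    -- the hypothesis: `W₁ ≅ W₂` as differential modules over `L(x)`:
    (hiso : ∃ Φ : W₁ ≃ₗ[RatFunc L] W₂, ∀ w : W₁, Φ (E₁ w) = E₂ (Φ w)) :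
    -- conclusion: `V₁ ≅ V₂` as differential modules over `K(x)`:
    ∃ Ψ : V₁ ≃ₗ[RatFunc K] V₂, ∀ v : V₁, Ψ (D₁ v) = D₂ (Ψ v) := by
  classical
  obtain ⟨s, hsTB, hadj⟩ := hpure
  have hsAI : AlgebraicIndependent K ((↑) : s → L) := hsTB.1
  obtain ⟨Φ, hΦ⟩ := hiso
  have hfin : Finite ι₁ := Module.Finite.finite_basis bV₁
  have : Fintype ι₁ := Fintype.ofFinite ι₁
  -- identify ι₂ with ι₁
  let e : ι₂ ≃ ι₁ := (bW₂.map Φ.symm).indexEquiv bW₁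
  let b₂V : Module.Basis ι₁ (RatFunc K) V₂ := bV₂.reindex e
  let b₂W : Module.Basis ι₁ (RatFunc L) W₂ := bW₂.reindex e
  have hb₂' : ∀ i, κ₂ (b₂V i) = b₂W i := by
    intro i
    simp only [b₂V, b₂W, Module.Basis.reindex_apply, hb₂]
  -- coefficient extraction helpers
  have extW : ∀ (f g : ι₁ → RatFunc L), (∑ i, f i • b₂W i) = (∑ i, g i • b₂W i) → ∀ i, f i = g i := by
    intro f g h i
    have h2 : f = g := by
      rw [← Module.Basis.repr_sum_self b₂W f, ← Module.Basis.repr_sum_self b₂W g, h]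
    exact congrFun h2 i
  have extV : ∀ (f g : ι₁ → RatFunc K), (∑ i, f i • b₂V i) = (∑ i, g i • b₂V i) → ∀ i, f i = g i := by
    intro f g h i
    have h2 : f = g := by
      rw [← Module.Basis.repr_sum_self b₂V f, ← Module.Basis.repr_sum_self b₂V g, h]
    exact congrFun h2 i
  -- the matrices of D₁ and D₂
  set A₁ : Matrix ι₁ ι₁ (RatFunc K) := fun i j => bV₁.repr (D₁ (bV₁ j)) i with hA₁def
  set A₂ : Matrix ι₁ ι₁ (RatFunc K) := fun i j => b₂V.repr (D₂ (b₂V j)) i with hA₂def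
  have hA₁ : ∀ j, D₁ (bV₁ j) = ∑ i, A₁ i j • bV₁ i := fun j => (bV₁.sum_repr _).symm
  have hA₂ : ∀ j, D₂ (b₂V j) = ∑ i, A₂ i j • b₂V i := fun j => (b₂V.sum_repr _).symm
  -- the matrices of E₁ and E₂ on the base-changed bases
  have hE₁b : ∀ j, E₁ (bW₁ j) = ∑ i, ι (A₁ i j) • bW₁ i := by
    intro j
    rw [← hb₁ j, ← hκ₁D, hA₁ j, map_sum]
    exact Finset.sum_congr rfl fun i _ => by rw [hκ₁, hb₁]
  have hE₂b : ∀ j, E₂ (b₂W j) = ∑ i, ι (A₂ i j) • b₂W i := by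
    intro j
    rw [← hb₂' j, ← hκ₂D, hA₂ j, map_sum]
    exact Finset.sum_congr rfl fun i _ => by rw [hκ₂, hb₂']
  -- the matrix of Φ and of its inverse
  set M : Matrix ι₁ ι₁ (RatFunc L) := fun i j => b₂W.repr (Φ (bW₁ j)) i with hMdef
  set M' : Matrix ι₁ ι₁ (RatFunc L) := fun i j => bW₁.repr (Φ.symm (b₂W j)) i with hM'def
  have hMb : ∀ j, Φ (bW₁ j) = ∑ i, M i j • b₂W i := fun j => (b₂W.sum_repr _).symm
  have hM'b : ∀ j, Φ.symm (b₂W j) = ∑ i, M' i j • bW₁ i := fun j => (bW₁.sum_repr _).symm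
  have hMM' : M * M' = 1 := by
    ext i j
    rw [Matrix.mul_apply, Matrix.one_apply]
    have h1 : Φ (Φ.symm (b₂W j)) = b₂W j := Φ.apply_symm_apply _
    rw [hM'b j, map_sum] at h1
    have h2 : ∀ k, Φ (M' k j • bW₁ k) = ∑ i, (M i k * M' k j) • b₂W i := by
      intro k
      rw [map_smul, hMb k, Finset.smul_sum]
      exact Finset.sum_congr rfl fun i _ => by rw [smul_smul, mul_comm]
    rw [Finset.sum_congr rfl fun k _ => h2 k, Finset.sum_comm] at h1
    have h3 : ∀ i, (∑ k, M i k * M' k j) = (if i = j then 1 else 0) := by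
      apply extW
      rw [show (∑ i, (if i = j then (1 : RatFunc L) else 0) • b₂W i) = b₂W j by
        simp [ite_smul], ← h1]
      exact Finset.sum_congr rfl fun i _ => Finset.sum_smul
    exact h3 i
  have hM'M : M' * M = 1 := by
    ext i j
    rw [Matrix.mul_apply, Matrix.one_apply]
    have h1 : Φ.symm (Φ (bW₁ j)) = bW₁ j := Φ.symm_apply_apply _
    rw [hMb j, map_sum] at h1
    have h2 : ∀ k, Φ.symm (M k j • b₂W k) = ∑ i, (M' i k * M k j) • bW₁ i := by
      intro k
      rw [map_smul, hM'b k, Finset.smul_sum]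
      exact Finset.sum_congr rfl fun i _ => by rw [smul_smul, mul_comm]
    rw [Finset.sum_congr rfl fun k _ => h2 k, Finset.sum_comm] at h1
    have extW1 : ∀ (f g : ι₁ → RatFunc L), (∑ i, f i • bW₁ i) = (∑ i, g i • bW₁ i) → ∀ i, f i = g i := by
      intro f g h i
      have h2 : f = g := by
        rw [← Module.Basis.repr_sum_self bW₁ f, ← Module.Basis.repr_sum_self bW₁ g, h]
      exact congrFun h2 i
    have h3 : ∀ i, (∑ k, M' i k * M k j) = (if i = j then 1 else 0) := by
      apply extW1
      rw [show (∑ i, (if i = j then (1 : RatFunc L) else 0) • bW₁ i) = bW₁ j by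
        simp [ite_smul], ← h1]
      exact Finset.sum_congr rfl fun i _ => Finset.sum_smul
    exact h3 i
  -- the differential equation satisfied by M
  have hδM : ∀ i j, δL (M i j) = (∑ k, M i k * ι (A₁ k j)) - ∑ k, ι (A₂ i k) * M k j := by
    intro i j
    have h1 : Φ (E₁ (bW₁ j)) = E₂ (Φ (bW₁ j)) := hΦ _
    -- LHS
    have hL : Φ (E₁ (bW₁ j)) = ∑ i, (∑ k, M i k * ι (A₁ k j)) • b₂W i := by
      rw [hE₁b j, map_sum]
      have h2 : ∀ k, Φ (ι (A₁ k j) • bW₁ k) = ∑ i, (M i k * ι (A₁ k j)) • b₂W i := by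
        intro k
        rw [map_smul, hMb k, Finset.smul_sum]
        exact Finset.sum_congr rfl fun i _ => by rw [smul_smul, mul_comm]
      rw [Finset.sum_congr rfl fun k _ => h2 k, Finset.sum_comm]
      exact Finset.sum_congr rfl fun i _ => Finset.sum_smul.symm
    -- RHS
    have hR : E₂ (Φ (bW₁ j)) = ∑ i, (δL (M i j) + ∑ k, ι (A₂ i k) * M k j) • b₂W i := by
      rw [hMb j, map_sum]
      have h2 : ∀ k, E₂ (M k j • b₂W k)
          = δL (M k j) • b₂W k + ∑ i, (ι (A₂ i k) * M k j) • b₂W i := by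
        intro k
        rw [hE₂ (M k j) (b₂W k), hE₂b k, Finset.smul_sum]
        congr 1
        exact Finset.sum_congr rfl fun i _ => by rw [smul_smul, mul_comm]
      rw [Finset.sum_congr rfl fun k _ => h2 k, Finset.sum_add_distrib, Finset.sum_comm
        (f := fun k i => (ι (A₂ i k) * M k j) • b₂W i)]
      rw [← Finset.sum_add_distrib]
      refine Finset.sum_congr rfl fun i _ => ?_
      rw [add_smul]
      congr 1
      exact Finset.sum_smul.symm
    have h3 := extW _ _ (hL.symm.trans (h1.trans hR))
    have h4 := h3 i
    rw [eq_sub_iff_add_eq]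
    exact h4.symm
  -- specialize to get matrices over RatFunc K
  obtain ⟨N, N', hNN', hN'N, hδN⟩ := St3.specialize hsAI hadj ι hιC hιX δK hδK δL hδL
    A₁ A₂ M M' hMM' hM'M hδM
  -- build the linear equivalence
  let ψ : V₁ →ₗ[RatFunc K] V₂ := Matrix.toLin bV₁ b₂V N
  let ψ' : V₂ →ₗ[RatFunc K] V₁ := Matrix.toLin b₂V bV₁ N'
  have hcomp1 : ψ.comp ψ' = LinearMap.id := by
    rw [show ψ.comp ψ' = Matrix.toLin b₂V b₂V (N * N') from (Matrix.toLin_mul b₂V bV₁ b₂V N N').symm,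
      hNN', Matrix.toLin_one]
  have hcomp2 : ψ'.comp ψ = LinearMap.id := by
    rw [show ψ'.comp ψ = Matrix.toLin bV₁ bV₁ (N' * N) from (Matrix.toLin_mul bV₁ b₂V bV₁ N' N).symm,
      hN'N, Matrix.toLin_one]
  let Ψ : V₁ ≃ₗ[RatFunc K] V₂ := LinearEquiv.ofLinear ψ ψ' hcomp1 hcomp2
  refine ⟨Ψ, ?_⟩
  -- horizontality: the defect is linear, so check it на basis
  have hΨapp : ∀ v, Ψ v = ψ v := fun v => rfl
  have hθsmul : ∀ (f : RatFunc K) (v : V₁),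
      Ψ (D₁ (f • v)) - D₂ (Ψ (f • v)) = f • (Ψ (D₁ v) - D₂ (Ψ v)) := by
    intro f v
    rw [hD₁, map_add, map_smul, map_smul, map_smul, hD₂, smul_sub]
    abel
  let θ : V₁ →ₗ[RatFunc K] V₂ :=
    { toFun := fun v => Ψ (D₁ v) - D₂ (Ψ v)
      map_add' := by
        intro x y
        show Ψ (D₁ (x + y)) - D₂ (Ψ (x + y)) = (Ψ (D₁ x) - D₂ (Ψ x)) + (Ψ (D₁ y) - D₂ (Ψ y))
        rw [map_add, map_add, map_add, map_add]
        abel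
      map_smul' := hθsmul }
  have hθ0 : θ = 0 := by
    apply Module.Basis.ext bV₁
    intro j
    show Ψ (D₁ (bV₁ j)) - D₂ (Ψ (bV₁ j)) = 0
    have hΨb : ∀ j, Ψ (bV₁ j) = ∑ i, N i j • b₂V i := by
      intro j
      rw [hΨapp]
      exact Matrix.toLin_self bV₁ b₂V N j
    have hL : Ψ (D₁ (bV₁ j)) = ∑ i, (∑ k, N i k * A₁ k j) • b₂V i := by
      rw [hA₁ j, map_sum]
      have h2 : ∀ k, Ψ (A₁ k j • bV₁ k) = ∑ i, (N i k * A₁ k j) • b₂V i := by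
        intro k
        rw [map_smul, hΨb k, Finset.smul_sum]
        exact Finset.sum_congr rfl fun i _ => by rw [smul_smul, mul_comm]
      rw [Finset.sum_congr rfl fun k _ => h2 k, Finset.sum_comm]
      exact Finset.sum_congr rfl fun i _ => Finset.sum_smul.symm
    have hR : D₂ (Ψ (bV₁ j)) = ∑ i, (δK (N i j) + ∑ k, A₂ i k * N k j) • b₂V i := by
      rw [hΨb j, map_sum]
      have h2 : ∀ k, D₂ (N k j • b₂V k)
          = δK (N k j) • b₂V k + ∑ i, (A₂ i k * N k j) • b₂V i := by
        intro k
        rw [hD₂ (N k j) (b₂V k), hA₂ k, Finset.smul_sum]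
        congr 1
        exact Finset.sum_congr rfl fun i _ => by rw [smul_smul, mul_comm]
      rw [Finset.sum_congr rfl fun k _ => h2 k, Finset.sum_add_distrib, Finset.sum_comm
        (f := fun k i => (A₂ i k * N k j) • b₂V i)]
      rw [← Finset.sum_add_distrib]
      refine Finset.sum_congr rfl fun i _ => ?_
      rw [add_smul]
      congr 1
      exact Finset.sum_smul.symm
    rw [hL, hR, ← Finset.sum_sub_distrib]
    refine Finset.sum_eq_zero fun i _ => ?_
    rw [← sub_smul]
    have : (∑ k, N i k * A₁ k j) - (δK (N i j) + ∑ k, A₂ i k * N k j) = 0 := by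
      rw [hδN i j]; ring
    rw [this, zero_smul]
  intro v
  have := congrFun (congrArg (fun (f : V₁ →ₗ[RatFunc K] V₂) => ⇑f) hθ0) v
  simpa [θ, sub_eq_zero] using this
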